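/- Let R be a commutative unital ring and f, g, h ∈ R[x] with f = g·h. If deg(g) = m > deg(f) and deg(h) = k, then g_m^{k+1}·f = 0, where g_m is the leading coefficient of g. -/

import Mathlib

open Polynomial in
private lemma aux_6 {R : Type*} [CommRing R] (g : R[X]) :
    ∀ k (h : R[X]), h.natDegree ≤ k → (g * h).degree < g.degree →
      Polynomial.C (g.leadingCoeff) ^ (k + 1) * (g * h) = 0 := by
  intro k
  induction k with
  | zero =>
    intro h hk hd
    have hh : h = C (h.coeff 0) := (Polynomial.eq_C_of_natDegree_le_zero hk)
    have hg : g ≠ 0 := by rintro rfl; simp at hd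
    have hkey : g.leadingCoeff * h.coeff 0 = 0 := by
      have := Polynomial.coeff_mul_degree_add_degree g h
      have hnd : h.natDegree = 0 := Nat.le_zero.mp hk
      rw [hnd, Nat.add_zero] at this
      have hcoeff : (g * h).coeff g.natDegree = 0 := by
        apply Polynomial.coeff_eq_zero_of_degree_lt
        calc (g * h).degree < g.degree := hd
          _ = (g.natDegree : WithBot ℕ) := (Polynomial.degree_eq_natDegree hg)
      rw [hcoeff] at this
      have h2 : h.leadingCoeff = h.coeff 0 := by
        unfold Polynomial.leadingCoeff; rw [hnd]
      rw [h2] at this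
      exact this.symm
    have hCh : Polynomial.C g.leadingCoeff * h = 0 := by
      rw [hh, ← Polynomial.C_mul, hkey, Polynomial.C_0]
    calc C g.leadingCoeff ^ (0 + 1) * (g * h)
        = g * (C g.leadingCoeff * h) := by ring
      _ = 0 := by rw [hCh, mul_zero]
  | succ k ih =>
    intro h hk hd
    by_cases hle : h.natDegree ≤ k
    · have := ih h hle hd
      calc C g.leadingCoeff ^ (k + 1 + 1) * (g * h)
          = C g.leadingCoeff * (C g.leadingCoeff ^ (k + 1) * (g * h)) := by ring
        _ = 0 := by rw [this, mul_zero]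
    · have hnd : h.natDegree = k + 1 := le_antisymm hk (Nat.lt_of_not_le hle)
      have hg : g ≠ 0 := by rintro rfl; simp at hd
      have hkey : g.leadingCoeff * h.leadingCoeff = 0 := by
        have := Polynomial.coeff_mul_degree_add_degree g h
        have hcoeff : (g * h).coeff (g.natDegree + h.natDegree) = 0 := by
          apply Polynomial.coeff_eq_zero_of_degree_lt
          calc (g * h).degree < g.degree := hd
            _ = (g.natDegree : WithBot ℕ) := Polynomial.degree_eq_natDegree hg
            _ ≤ ((g.natDegree + h.natDegree : ℕ) : WithBot ℕ) := by
                exact_mod_cast Nat.cast_le.mpr (Nat.le_add_right _ _)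
        rw [hcoeff] at this
        exact this.symm
      set h' := C g.leadingCoeff * h with hh'
      have hnd' : h'.natDegree ≤ k := by
        by_cases hz : h' = 0
        · simp [hz]
        · have h1 : h'.natDegree ≤ k + 1 := hnd ▸ Polynomial.natDegree_C_mul_le _ _
          rcases Nat.lt_or_ge h'.natDegree (k + 1) with hlt | hge
          · omega
          · have heq : h'.natDegree = k + 1 := le_antisymm h1 hge
            exfalso
            apply hz
            apply Polynomial.leadingCoeff_eq_zero.mp
            rw [Polynomial.leadingCoeff, heq, hh', Polynomial.coeff_C_mul, ← hnd]
            exact hkey ▸ rfl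
      have hd' : (g * h').degree < g.degree := by
        have : (g * h') = C g.leadingCoeff * (g * h) := by ring
        rw [this]
        calc (C g.leadingCoeff * (g * h)).degree
            ≤ (C g.leadingCoeff).degree + (g * h).degree := Polynomial.degree_mul_le _ _
          _ ≤ 0 + (g * h).degree := add_le_add Polynomial.degree_C_le le_rfl
          _ = (g * h).degree := zero_add _
          _ < g.degree := hd
      have := ih h' hnd' hd'
      calc C g.leadingCoeff ^ (k + 1 + 1) * (g * h)
          = C g.leadingCoeff ^ (k + 1) * (g * h') := by rw [hh']; ring
        _ = 0 := this

open Polynomial in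
theorem stmt_6 {R : Type*} [CommRing R] (f g h : R[X])
    (hfgh : f = g * h) (hdeg : f.degree < g.degree) :
    Polynomial.C (g.leadingCoeff) ^ (h.natDegree + 1) * f = 0 := by
  subst hfgh
  exact aux_6 g h.natDegree h le_rfl hdeg
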